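/- Let d, n ≥ 1, M ≥ 0 and σ ≥ 0. Let V : ℝ^d × ℝ^d → M_n(ℂ) be measurable with Frobenius norm |V(x,ξ)| ≤ M for all x, ξ, such that V(x, ξ + k) = V(x, ξ) for every k ∈ ℤ^d (ℤ^d-periodicity in the second variable). Let η > 0 and ε ∈ (0, η], and suppose |V(x, ξ) − V(x', ξ)| ≤ σ for all ξ and all x, x' with |x − x'| ≤ √d · η. Define V⁰(x) := ∫_{[0,1]^d} V(x, ξ) dξ. Then there exists a constant C > 0, depending only on d, such that for every γ ∈ ℤ^d: | η^{−d} ∫_{□_γ^η} ( V(x, x/ε) − V⁰(x) ) dx | ≤ C ( σ + M ε/η ). -/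

import Mathlib

open MeasureTheory Set
open scoped Pointwise ENNReal

noncomputable section

/-- `ℝ^d` with its Euclidean structure. -/
abbrev Ed (d : ℕ) := EuclideanSpace ℝ (Fin d)

/-- A vector of `ℝ^d` given by its coordinates. -/
def toEd {d : ℕ} (f : Fin d → ℝ) : Ed d := WithLp.toLp 2 f

/-- The cell `□_γ^η = η•γ + [0,η]^d` of the rescaled lattice `ηℤ^d`. -/
def cell (d : ℕ) (η : ℝ) (γ : Fin d → ℤ) : Set (Ed d) :=
  {x | ∀ i, η * γ i ≤ x i ∧ x i ≤ η * γ i + η}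

/-- Frobenius norm of a complex `n × n` matrix. -/
def frob {n : ℕ} (A : Matrix (Fin n) (Fin n) ℂ) : ℝ :=
  Real.sqrt (∑ i, ∑ k, ‖A i k‖ ^ 2)


namespace Stmt13

instance instMeasE (ι : Type) [Fintype ι] : MeasurableSpace (EuclideanSpace ℂ ι) :=
  inferInstance

instance instBorelE (ι : Type) [Fintype ι] : BorelSpace (EuclideanSpace ℂ ι) :=
  inferInstance

variable {d : ℕ}

lemma measurable_coord (i : Fin d) : Measurable fun x : Ed d => x i :=
  (measurable_pi_apply i).comp ((MeasurableEquiv.toLp 2 (Fin d → ℝ)).symm).measurable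

lemma measurableSet_boxIco (l u : Fin d → ℝ) :
    MeasurableSet {x : Ed d | ∀ i, l i ≤ x i ∧ x i < u i} := by
  have h : {x : Ed d | ∀ i, l i ≤ x i ∧ x i < u i}
      = ⋂ i, ((fun x : Ed d => x i) ⁻¹' Set.Ico (l i) (u i)) := by
    ext x; simp [Set.mem_iInter, Set.mem_Ico]
  rw [h]
  exact MeasurableSet.iInter fun i => (measurable_coord i) measurableSet_Ico

lemma measurableSet_boxIcc (l u : Fin d → ℝ) :
    MeasurableSet {x : Ed d | ∀ i, l i ≤ x i ∧ x i ≤ u i} := by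
  have h : {x : Ed d | ∀ i, l i ≤ x i ∧ x i ≤ u i}
      = ⋂ i, ((fun x : Ed d => x i) ⁻¹' Set.Icc (l i) (u i)) := by
    ext x; simp [Set.mem_iInter, Set.mem_Icc]
  rw [h]
  exact MeasurableSet.iInter fun i => (measurable_coord i) measurableSet_Icc

lemma volume_boxIco (l u : Fin d → ℝ) :
    volume {x : Ed d | ∀ i, l i ≤ x i ∧ x i < u i} = ∏ i, ENNReal.ofReal (u i - l i) := by
  have h1 : {x : Ed d | ∀ i, l i ≤ x i ∧ x i < u i}
      = ((MeasurableEquiv.toLp 2 (Fin d → ℝ)).symm) ⁻¹'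
          (Set.univ.pi fun i => Set.Ico (l i) (u i)) := by
    ext x
    simp only [Set.mem_preimage, Set.mem_univ_pi, Set.mem_Ico, Set.mem_setOf_eq]
    exact Iff.rfl
  rw [h1, (EuclideanSpace.volume_preserving_symm_measurableEquiv_toLp (Fin d)).measure_preimage
      ((MeasurableSet.univ_pi fun i => measurableSet_Ico).nullMeasurableSet)]
  rw [volume_pi_pi]
  simp [Real.volume_Ico]

lemma volume_boxIcc (l u : Fin d → ℝ) :
    volume {x : Ed d | ∀ i, l i ≤ x i ∧ x i ≤ u i} = ∏ i, ENNReal.ofReal (u i - l i) := by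
  have h1 : {x : Ed d | ∀ i, l i ≤ x i ∧ x i ≤ u i}
      = ((MeasurableEquiv.toLp 2 (Fin d → ℝ)).symm) ⁻¹'
          (Set.univ.pi fun i => Set.Icc (l i) (u i)) := by
    ext x
    simp only [Set.mem_preimage, Set.mem_univ_pi, Set.mem_Icc, Set.mem_setOf_eq]
    exact Iff.rfl
  rw [h1, (EuclideanSpace.volume_preserving_symm_measurableEquiv_toLp (Fin d)).measure_preimage
      ((MeasurableSet.univ_pi fun i => measurableSet_Icc).nullMeasurableSet)]
  rw [volume_pi_pi]
  simp [Real.volume_Icc]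

lemma volume_hyperplane (i : Fin d) (c : ℝ) : volume {x : Ed d | x i = c} = 0 := by
  have h1 : {x : Ed d | x i = c}
      = ((MeasurableEquiv.toLp 2 (Fin d → ℝ)).symm) ⁻¹'
          (Set.univ.pi fun j => if j = i then ({c} : Set ℝ) else Set.univ) := by
    ext x
    simp only [Set.mem_preimage, Set.mem_univ_pi, Set.mem_setOf_eq]
    constructor
    · intro h j
      by_cases hj : j = i
      · subst hj; simpa using h
      · simp [hj]
    · intro h
      have := h i
      simpa using this
  rw [h1, (EuclideanSpace.volume_preserving_symm_measurableEquiv_toLp (Fin d)).measure_preimage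
      ((MeasurableSet.univ_pi fun j => by
        by_cases hj : j = i <;> simp [hj]).nullMeasurableSet)]
  rw [volume_pi_pi]
  refine Finset.prod_eq_zero (Finset.mem_univ i) ?_
  simp

lemma boxIcc_ae_boxIco (l u : Fin d → ℝ) :
    {x : Ed d | ∀ i, l i ≤ x i ∧ x i ≤ u i}
      =ᵐ[volume] {x : Ed d | ∀ i, l i ≤ x i ∧ x i < u i} := by
  rw [MeasureTheory.ae_eq_set]
  constructor
  · refine measure_mono_null (fun x hx => ?_)
      (measure_iUnion_null fun i => volume_hyperplane i (u i))
    obtain ⟨h1, h2⟩ := hx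
    simp only [Set.mem_setOf_eq, not_forall] at h2
    obtain ⟨i, hi⟩ := h2
    rw [Set.mem_iUnion]
    refine ⟨i, ?_⟩
    have hlt : ¬ x i < u i := fun hl => hi ⟨(h1 i).1, hl⟩
    exact le_antisymm (h1 i).2 (not_lt.1 hlt)
  · have hsub : {x : Ed d | ∀ i, l i ≤ x i ∧ x i < u i}
        ⊆ {x : Ed d | ∀ i, l i ≤ x i ∧ x i ≤ u i} := fun x hx i => ⟨(hx i).1, (hx i).2.le⟩
    rw [Set.diff_eq_empty.2 hsub]
    simp

lemma volume_cell {η : ℝ} (hη : 0 ≤ η) (γ : Fin d → ℤ) :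
    volume (cell d η γ) = ENNReal.ofReal (η ^ d) := by
  have h := volume_boxIcc (d := d) (fun i => η * γ i) (fun i => η * γ i + η)
  simp only [add_sub_cancel_left] at h
  rw [show cell d η γ = {x : Ed d | ∀ i, η * γ i ≤ x i ∧ x i ≤ η * γ i + η} from rfl]
  rw [h, Finset.prod_const, Finset.card_univ, Fintype.card_fin, ENNReal.ofReal_pow hη]

lemma measurableSet_cell (η : ℝ) (γ : Fin d → ℤ) : MeasurableSet (cell d η γ) :=
  measurableSet_boxIcc _ _

lemma norm_setIntegral_le_of_norm_le_const' {α E : Type*} [MeasurableSpace α]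
    [NormedAddCommGroup E] [NormedSpace ℝ E] {μ : Measure α} {s : Set α} {f : α → E} {C : ℝ}
    (hs : μ s < ⊤) (_hsm : MeasurableSet s) (hC : ∀ x ∈ s, ‖f x‖ ≤ C) :
    ‖∫ x in s, f x ∂μ‖ ≤ C * (μ s).toReal :=
  norm_setIntegral_le_of_norm_le_const hs hC

lemma integrableOn_of_bdd {E : Type*} [NormedAddCommGroup E] {f : Ed d → E} {s : Set (Ed d)}
    (hvol : volume s < ⊤) (hf : AEStronglyMeasurable f (volume.restrict s)) {M : ℝ}
    (hbd : ∀ x, ‖f x‖ ≤ M) : IntegrableOn f s :=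
  Integrable.mono' (integrableOn_const hvol.ne) hf (Filter.Eventually.of_forall hbd)

lemma pow_sub_pow_le {a b : ℝ} (h0 : 0 ≤ b) (hba : b ≤ a) (m : ℕ) :
    a ^ (m + 1) - b ^ (m + 1) ≤ ((m : ℝ) + 1) * (a - b) * a ^ m := by
  induction m with
  | zero => simp
  | succ t ih =>
    have ha0 : 0 ≤ a := h0.trans hba
    have hb : b ^ (t + 1) ≤ a ^ (t + 1) := pow_le_pow_left₀ h0 hba _
    have h2 : a * (a ^ (t + 1) - b ^ (t + 1)) ≤ a * (((t : ℝ) + 1) * (a - b) * a ^ t) :=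
      mul_le_mul_of_nonneg_left ih ha0
    have h4 : (a - b) * b ^ (t + 1) ≤ (a - b) * a ^ (t + 1) :=
      mul_le_mul_of_nonneg_left hb (by linarith)
    have key : a ^ (t + 2) - b ^ (t + 2)
        = a * (a ^ (t + 1) - b ^ (t + 1)) + (a - b) * b ^ (t + 1) := by ring
    have h3 : a * (((t : ℝ) + 1) * (a - b) * a ^ t) = ((t : ℝ) + 1) * (a - b) * a ^ (t + 1) := by
      ring
    push_cast
    nlinarith [pow_nonneg ha0 (t + 1)]

lemma integral_proj {α : Type*} [MeasurableSpace α] (μ : Measure α) {ι : Type} [Fintype ι]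
    {F : α → EuclideanSpace ℂ ι} (hF : Integrable F μ) (i : ι) :
    (∫ x, F x ∂μ) i = ∫ x, F x i ∂μ := by
  have h := (EuclideanSpace.proj (𝕜 := ℂ) i).integral_comp_comm hF
  have h2 : ∀ v : EuclideanSpace ℂ ι, EuclideanSpace.proj (𝕜 := ℂ) i v = v i := fun v => rfl
  rw [h2] at h
  rw [← h]
  exact integral_congr_ae (Filter.Eventually.of_forall fun x => (h2 (F x)))


set_option maxHeartbeats 1600000 in
lemma core (hd : 1 ≤ d) {E : Type*} [NormedAddCommGroup E] [NormedSpace ℝ E]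
    [CompleteSpace E]
    {g : Ed d → E} (hg : StronglyMeasurable g) {M : ℝ} (hM : 0 ≤ M)
    (hgb : ∀ x, ‖g x‖ ≤ M)
    (hper : ∀ (x : Ed d) (k : Fin d → ℤ), g (x + toEd fun i => (k i : ℝ)) = g x)
    {η ε : ℝ} (hη : 0 < η) (hε : 0 < ε) (hεη : ε ≤ η) (γ : Fin d → ℤ) :
    ‖(∫ x in cell d η γ, g (ε⁻¹ • x)) - (η ^ d) • (∫ ξ in cell d 1 0, g ξ)‖
      ≤ 4 * d * M * ε * η ^ (d - 1) := by
  obtain ⟨m, hm⟩ : ∃ m, d = m + 1 := ⟨d - 1, (Nat.succ_pred_eq_of_pos hd).symm⟩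
  have hdm : d - 1 = m := by omega
  set I : E := ∫ ξ in cell d 1 0, g ξ with hI_def
  set h : Ed d → E := fun x => g (ε⁻¹ • x) with hh_def
  have hsm_h : StronglyMeasurable h := hg.comp_measurable (measurable_const_smul ε⁻¹)
  have hhb : ∀ x, ‖h x‖ ≤ M := fun x => hgb _
  -- facts about the unit cell
  have hvol10 : volume (cell d 1 0) = 1 := by
    rw [volume_cell zero_le_one]; simp
  have hInorm : ‖I‖ ≤ M := by
    have := norm_setIntegral_le_of_norm_le_const' (μ := volume) (s := cell d 1 0)
      (f := g) (by rw [hvol10]; exact ENNReal.one_lt_top) (measurableSet_cell 1 0)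
      (fun x _ => hgb x)
    rwa [hvol10, ENNReal.toReal_one, mul_one] at this
  -- lattice data
  set a : Fin d → ℤ := fun i => ⌈η * γ i / ε⌉ with ha_def
  set b : Fin d → ℤ := fun i => ⌊(η * γ i + η) / ε⌋ - 1 with hb_def
  set K : Finset (Fin d → ℤ) := Fintype.piFinset fun i => Finset.Icc (a i) (b i) with hK_def
  set Ck : (Fin d → ℤ) → Set (Ed d) :=
    fun k => {x : Ed d | ∀ i, ε * k i ≤ x i ∧ x i < ε * k i + ε} with hCk_def
  set Q : Set (Ed d) := {x : Ed d | ∀ i, η * γ i ≤ x i ∧ x i < η * γ i + η} with hQ_def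
  have hQmeas : MeasurableSet Q := measurableSet_boxIco _ _
  have hCkmeas : ∀ k, MeasurableSet (Ck k) := fun k => measurableSet_boxIco _ _
  have hvolQ : volume Q = ENNReal.ofReal (η ^ d) := by
    have := volume_boxIco (d := d) (fun i => η * γ i) (fun i => η * γ i + η)
    simp only [add_sub_cancel_left] at this
    rw [hQ_def, this, Finset.prod_const, Finset.card_univ, Fintype.card_fin,
      ENNReal.ofReal_pow hη.le]
  have hvolCk : ∀ k, volume (Ck k) = ENNReal.ofReal (ε ^ d) := by
    intro k
    have := volume_boxIco (d := d) (fun i => ε * k i) (fun i => ε * k i + ε)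
    simp only [add_sub_cancel_left] at this
    rw [hCk_def]
    rw [this, Finset.prod_const, Finset.card_univ, Fintype.card_fin, ENNReal.ofReal_pow hε.le]
  have hQfin : volume Q < ⊤ := by rw [hvolQ]; exact ENNReal.ofReal_lt_top
  -- per-cell integral identity
  have hcellint : ∀ k : Fin d → ℤ, ∫ x in Ck k, h x = (ε ^ d) • I := by
    intro k
    have hscale := MeasureTheory.Measure.setIntegral_comp_smul_of_pos (volume : Measure (Ed d))
      g (Ck k) (inv_pos.2 hε)
    have hsmulset : ε⁻¹ • Ck k = {y : Ed d | ∀ i, (k i : ℝ) ≤ y i ∧ y i < k i + 1} := by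
      ext y
      rw [Set.mem_inv_smul_set_iff₀ (ne_of_gt hε)]
      simp only [hCk_def, Set.mem_setOf_eq]
      constructor
      · intro hy i
        have h1 := hy i
        have hyi : (ε • y) i = ε * y i := rfl
        rw [hyi] at h1
        refine ⟨(mul_le_mul_iff_right₀ hε).1 h1.1, (mul_lt_mul_iff_right₀ hε).1 ?_⟩
        show ε * y i < ε * ((k i : ℝ) + 1)
        linarith [h1.2]
      · intro hy i
        have h1 := hy i
        have hyi : (ε • y) i = ε * y i := rfl
        rw [hyi]
        refine ⟨(mul_le_mul_iff_right₀ hε).2 h1.1, ?_⟩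
        have h2 : ε * y i < ε * ((k i : ℝ) + 1) := (mul_lt_mul_iff_right₀ hε).2 h1.2
        linarith
    have hfr : Module.finrank ℝ (Ed d) = d := finrank_euclideanSpace_fin
    rw [hfr] at hscale
    have hεpow : ((ε⁻¹ : ℝ) ^ d)⁻¹ = ε ^ d := by
      rw [← inv_pow, inv_inv]
    rw [hsmulset, hεpow] at hscale
    -- translation
    set v : Ed d := toEd fun i => (k i : ℝ) with hv_def
    have hmp : MeasurePreserving (fun x : Ed d => x + v) volume volume :=
      measurePreserving_add_right volume v
    have hemb : MeasurableEmbedding (fun x : Ed d => x + v) :=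
      (MeasurableEquiv.addRight v).measurableEmbedding
    have hpre : (fun x : Ed d => x + v) ⁻¹' {y : Ed d | ∀ i, (k i : ℝ) ≤ y i ∧ y i < k i + 1}
        = {y : Ed d | ∀ i, (0 : ℝ) ≤ y i ∧ y i < 1} := by
      ext x
      simp only [Set.mem_preimage, Set.mem_setOf_eq]
      have hco : ∀ i, (x + v) i = x i + k i := fun i => by rw [hv_def]; simp [toEd]
      constructor
      · intro hx i
        have := hx i
        rw [hco i] at this
        constructor <;> linarith [this.1, this.2]
      · intro hx i
        have := hx i
        rw [hco i]
        constructor <;> linarith [this.1, this.2]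
    have htrans : ∫ y in {y : Ed d | ∀ i, (k i : ℝ) ≤ y i ∧ y i < k i + 1}, g y
        = ∫ y in {y : Ed d | ∀ i, (0 : ℝ) ≤ y i ∧ y i < 1}, g y := by
      rw [← hmp.setIntegral_preimage_emb hemb g _, hpre]
      refine setIntegral_congr_fun (measurableSet_boxIco _ _) fun x _ => ?_
      exact hper x k
    have hcell10 : cell d 1 0 = {x : Ed d | ∀ i, (0:ℝ) ≤ x i ∧ x i ≤ 1} := by
      ext x; simp [cell]
    have hae : ∫ y in {y : Ed d | ∀ i, (0 : ℝ) ≤ y i ∧ y i < 1}, g y = I := by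
      rw [hI_def, hcell10]
      exact (setIntegral_congr_set (boxIcc_ae_boxIco (fun _ => (0:ℝ)) (fun _ => (1:ℝ)))).symm
    rw [hh_def]
    simp only
    rw [hscale, htrans, hae]
  -- U and its complement
  set U : Set (Ed d) := ⋃ k ∈ K, Ck k with hU_def
  have hUmeas : MeasurableSet U := MeasurableSet.biUnion K.countable_toSet fun k _ => hCkmeas k
  have hdisj : ∀ k k' : Fin d → ℤ, k ≠ k' → Disjoint (Ck k) (Ck k') := by
    intro k k' hne
    rw [Set.disjoint_left]
    intro x hx hx'
    obtain ⟨i, hi⟩ := Function.ne_iff.1 hne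
    have h1 := hx i
    have h2 := hx' i
    rcases hi.lt_or_gt with hlt | hlt
    · have : ((k i : ℝ) + 1) ≤ (k' i : ℝ) := by exact_mod_cast Int.add_one_le_iff.2 hlt
      nlinarith [h1.1, h1.2, h2.1, h2.2]
    · have : ((k' i : ℝ) + 1) ≤ (k i : ℝ) := by exact_mod_cast Int.add_one_le_iff.2 hlt
      nlinarith [h1.1, h1.2, h2.1, h2.2]
  have hQK : ∀ k ∈ K, Ck k ⊆ Q := by
    intro k hk x hx i
    rw [hK_def, Fintype.mem_piFinset] at hk
    obtain ⟨hk1, hk2⟩ := Finset.mem_Icc.1 (hk i)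
    have hai : a i = ⌈η * γ i / ε⌉ := rfl
    have hbi : b i = ⌊(η * γ i + η) / ε⌋ - 1 := rfl
    rw [hai] at hk1
    rw [hbi] at hk2
    have hx1 := (hx i).1
    have hx2 := (hx i).2
    have hc1 : η * γ i / ε ≤ (k i : ℝ) := le_trans (Int.le_ceil _) (by exact_mod_cast hk1)
    have hc1' : η * γ i ≤ (k i : ℝ) * ε := (div_le_iff₀ hε).1 hc1
    have hc2 : ((k i : ℝ) + 1) ≤ ((η * γ i + η) / ε) := by
      have hkb : (k i : ℝ) + 1 ≤ (⌊(η * γ i + η) / ε⌋ : ℝ) := by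
        have : k i + 1 ≤ ⌊(η * γ i + η) / ε⌋ := by omega
        exact_mod_cast this
      exact le_trans hkb (Int.floor_le _)
    have hc2' : ((k i : ℝ) + 1) * ε ≤ η * γ i + η := by
      rw [← le_div_iff₀ hε]; exact hc2
    constructor
    · nlinarith
    · nlinarith
  have hUQ : U ⊆ Q := Set.iUnion₂_subset hQK
  have hUvol : volume U = (K.card : ℝ≥0∞) * ENNReal.ofReal (ε ^ d) := by
    rw [hU_def, measure_biUnion_finset (fun k _ k' _ hne => hdisj _ _ hne)
      (fun k _ => hCkmeas k)]
    simp [hvolCk, Finset.sum_const, nsmul_eq_mul]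
  have hUint : ∫ x in U, h x = ((K.card : ℝ) * ε ^ d) • I := by
    rw [hU_def, integral_biUnion_finset K (fun k _ => hCkmeas k)
      (fun k _ k' _ hne => hdisj _ _ hne)
      (fun k _ => integrableOn_of_bdd (by rw [hvolCk]; exact ENNReal.ofReal_lt_top)
        hsm_h.aestronglyMeasurable.restrict hhb)]
    simp only [hcellint, Finset.sum_const]
    rw [← Nat.cast_smul_eq_nsmul ℝ, smul_smul]
  -- measure bookkeeping
  have hsplitvol : volume Q = volume U + volume (Q \ U) := by
    conv_lhs => rw [← Set.union_diff_cancel hUQ]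
    exact measure_union disjoint_sdiff_right (hQmeas.diff hUmeas)
  set r : ℝ := (volume (Q \ U)).toReal with hr_def
  have hrnn : 0 ≤ r := ENNReal.toReal_nonneg
  have hUfin : volume U ≠ ⊤ := by
    rw [hUvol]; exact ENNReal.mul_ne_top (by simp) ENNReal.ofReal_ne_top
  have hQUfin : volume (Q \ U) ≠ ⊤ :=
    (lt_of_le_of_lt (measure_mono Set.diff_subset) hQfin).ne
  have hr : η ^ d = (K.card : ℝ) * ε ^ d + r := by
    have := congrArg ENNReal.toReal hsplitvol
    rw [hvolQ, ENNReal.toReal_ofReal (pow_nonneg hη.le d),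
      ENNReal.toReal_add hUfin hQUfin, hUvol] at this
    rw [this, ENNReal.toReal_mul, ENNReal.toReal_ofReal (pow_nonneg hε.le d)]
    simp [hr_def]
  -- integral split
  have hintU : IntegrableOn h U :=
    integrableOn_of_bdd (lt_of_le_of_lt (measure_mono hUQ) hQfin)
      hsm_h.aestronglyMeasurable.restrict hhb
  have hintQU : IntegrableOn h (Q \ U) :=
    integrableOn_of_bdd (lt_of_le_of_lt (measure_mono Set.diff_subset) hQfin)
      hsm_h.aestronglyMeasurable.restrict hhb
  have hsplitint : ∫ x in Q, h x = (∫ x in U, h x) + ∫ x in Q \ U, h x := by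
    conv_lhs => rw [← Set.union_diff_cancel hUQ]
    exact setIntegral_union disjoint_sdiff_right (hQmeas.diff hUmeas) hintU hintQU
  have hcellQ : ∫ x in cell d η γ, h x = ∫ x in Q, h x := by
    refine setIntegral_congr_set ?_
    exact boxIcc_ae_boxIco (fun i => η * γ i) (fun i => η * γ i + η)
  have hkey : (∫ x in cell d η γ, h x) - (η ^ d) • I = (∫ x in Q \ U, h x) - r • I := by
    rw [hcellQ, hsplitint, hUint, hr, add_smul]
    abel
  -- bound on r
  have hrbound : r ≤ 2 * d * ε * η ^ (d - 1) := by
    by_cases hcase : 2 * ε ≤ η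
    · -- inner box
      set Bin : Set (Ed d) :=
        {x : Ed d | ∀ i, η * γ i + ε ≤ x i ∧ x i ≤ η * γ i + η - ε} with hBin_def
      have hBinU : Bin ⊆ U := by
        intro x hx
        set k : Fin d → ℤ := fun i => ⌊x i / ε⌋ with hk_def
        have hxCk : x ∈ Ck k := by
          intro i
          have hf1 : (⌊x i / ε⌋ : ℝ) ≤ x i / ε := Int.floor_le _
          have hf2 : x i / ε < (⌊x i / ε⌋ : ℝ) + 1 := Int.lt_floor_add_one _
          have e1 : ε * (k i : ℝ) ≤ x i := by
            rw [hk_def]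
            have := mul_le_mul_of_nonneg_left hf1 hε.le
            rwa [mul_div_cancel₀ _ (ne_of_gt hε)] at this
          have e2 : x i < ε * (k i : ℝ) + ε := by
            rw [hk_def]
            have := mul_lt_mul_of_pos_left hf2 hε
            rw [mul_div_cancel₀ _ (ne_of_gt hε)] at this
            nlinarith
          exact ⟨e1, e2⟩
        have hkK : k ∈ K := by
          rw [hK_def, Fintype.mem_piFinset]
          intro i
          rw [Finset.mem_Icc]
          have hx1 := (hx i).1
          have hx2 := (hx i).2
          have hki : k i = ⌊x i / ε⌋ := rfl
          have hai : a i = ⌈η * γ i / ε⌉ := rfl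
          have hbi : b i = ⌊(η * γ i + η) / ε⌋ - 1 := rfl
          constructor
          · -- a i ≤ k i
            have hdiv : η * γ i / ε + 1 ≤ x i / ε := by
              have he1 : η * γ i / ε + 1 = (η * γ i + ε) / ε := by
                field_simp
              rw [he1]
              exact (div_le_div_iff_of_pos_right hε).2 (by linarith)
            have h1 : a i ≤ ⌊η * γ i / ε⌋ + 1 := Int.ceil_le_floor_add_one _
            have h2 : (⌊η * γ i / ε⌋ : ℤ) + 1 = ⌊η * γ i / ε + 1⌋ := by
              rw [Int.floor_add_one]
            have h3 : ⌊η * γ i / ε + 1⌋ ≤ ⌊x i / ε⌋ := Int.floor_le_floor hdiv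
            omega
          · -- k i ≤ b i
            have hdiv : x i / ε + 1 ≤ (η * γ i + η) / ε := by
              have he1 : x i / ε + 1 = (x i + ε) / ε := by
                field_simp
              rw [he1]
              exact (div_le_div_iff_of_pos_right hε).2 (by linarith)
            have h2 : (⌊x i / ε⌋ : ℤ) + 1 = ⌊x i / ε + 1⌋ := by rw [Int.floor_add_one]
            have h3 : ⌊x i / ε + 1⌋ ≤ ⌊(η * γ i + η) / ε⌋ := Int.floor_le_floor hdiv
            omega
        exact Set.mem_biUnion hkK hxCk
      have hBinQc : Bin ⊆ cell d η γ := by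
        intro x hx i
        have := hx i
        exact ⟨by linarith [this.1], by linarith [this.2]⟩
      have hBinmeas : MeasurableSet Bin := measurableSet_boxIcc _ _
      have hvolBin : volume Bin = ENNReal.ofReal ((η - 2 * ε) ^ d) := by
        have := volume_boxIcc (d := d) (fun i => η * γ i + ε) (fun i => η * γ i + η - ε)
        rw [hBin_def, this]
        have : ∀ i : Fin d, (η * γ i + η - ε) - (η * γ i + ε) = η - 2 * ε := fun i => by ring
        simp only [this]
        rw [Finset.prod_const, Finset.card_univ, Fintype.card_fin,
          ENNReal.ofReal_pow (by linarith)]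
      have hsub : Q \ U ⊆ cell d η γ \ Bin := by
        intro x hx
        refine ⟨fun i => ⟨(hx.1 i).1, (hx.1 i).2.le⟩, fun hB => hx.2 (hBinU hB)⟩
      have hvolQc : volume (cell d η γ) = ENNReal.ofReal (η ^ d) := volume_cell hη.le γ
      have hQcfin : volume (cell d η γ) < ⊤ := by rw [hvolQc]; exact ENNReal.ofReal_lt_top
      have hsplit2 : volume (cell d η γ) = volume Bin + volume (cell d η γ \ Bin) := by
        conv_lhs => rw [← Set.union_diff_cancel hBinQc]
        exact measure_union disjoint_sdiff_right ((measurableSet_cell η γ).diff hBinmeas)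
      have hdifffin : volume (cell d η γ \ Bin) ≠ ⊤ :=
        (lt_of_le_of_lt (measure_mono Set.diff_subset) hQcfin).ne
      have htR : (volume (cell d η γ \ Bin)).toReal = η ^ d - (η - 2 * ε) ^ d := by
        have := congrArg ENNReal.toReal hsplit2
        rw [hvolQc, ENNReal.toReal_ofReal (pow_nonneg hη.le d),
          ENNReal.toReal_add (by rw [hvolBin]; exact ENNReal.ofReal_ne_top) hdifffin, hvolBin,
          ENNReal.toReal_ofReal (pow_nonneg (by linarith) d)] at this
        linarith
      have hrle : r ≤ η ^ d - (η - 2 * ε) ^ d := by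
        rw [hr_def, ← htR]
        exact ENNReal.toReal_mono hdifffin (measure_mono hsub)
      have hpow : η ^ d - (η - 2 * ε) ^ d ≤ (d : ℝ) * (2 * ε) * η ^ (d - 1) := by
        rw [hm, Nat.add_sub_cancel]
        have hppl := pow_sub_pow_le (a := η) (b := η - 2 * ε) (by linarith) (by linarith) m
        calc η ^ (m + 1) - (η - 2 * ε) ^ (m + 1)
            ≤ ((m : ℝ) + 1) * (η - (η - 2 * ε)) * η ^ m := hppl
          _ = ((m + 1 : ℕ) : ℝ) * (2 * ε) * η ^ m := by push_cast; ring
      calc r ≤ η ^ d - (η - 2 * ε) ^ d := hrle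
        _ ≤ (d : ℝ) * (2 * ε) * η ^ (d - 1) := hpow
        _ = 2 * d * ε * η ^ (d - 1) := by ring
    · -- η < 2ε
      push_neg at hcase
      have hrle : r ≤ η ^ d := by
        rw [hr_def]
        have hmono : volume (Q \ U) ≤ volume Q :=
          measure_mono (Set.diff_subset : Q \ U ⊆ Q)
        have := ENNReal.toReal_mono (by rw [hvolQ]; exact ENNReal.ofReal_ne_top) hmono
        rwa [hvolQ, ENNReal.toReal_ofReal (pow_nonneg hη.le d)] at this
      have hds : (1 : ℝ) ≤ d := by exact_mod_cast hd
      have hpowpos : 0 < η ^ (d - 1) := pow_pos hη _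
      have h5 : η ^ d = η ^ (d - 1) * η := by
        rw [hm, Nat.add_sub_cancel, pow_succ]
      have h6 : η ^ (d - 1) * η ≤ η ^ (d - 1) * (2 * ε) :=
        mul_le_mul_of_nonneg_left hcase.le (pow_nonneg hη.le _)
      have h7 : (1 : ℝ) * (2 * ε * η ^ (d - 1)) ≤ (d : ℝ) * (2 * ε * η ^ (d - 1)) :=
        mul_le_mul_of_nonneg_right hds (by positivity)
      nlinarith [h5, h6, h7, hrle]
  -- final estimate
  rw [hkey]
  have h1 : ‖∫ x in Q \ U, h x‖ ≤ M * r := by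
    have := norm_setIntegral_le_of_norm_le_const' (μ := volume) (s := Q \ U) (f := h)
      (lt_of_le_of_lt (measure_mono Set.diff_subset) hQfin) (hQmeas.diff hUmeas)
      (fun x _ => hhb x)
    rwa [← hr_def] at this
  have h2 : ‖r • I‖ ≤ r * M := by
    rw [norm_smul, Real.norm_eq_abs, abs_of_nonneg hrnn]
    exact mul_le_mul_of_nonneg_left hInorm hrnn
  calc ‖(∫ x in Q \ U, h x) - r • I‖ ≤ ‖∫ x in Q \ U, h x‖ + ‖r • I‖ := norm_sub_le _ _
    _ ≤ M * r + r * M := add_le_add h1 h2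
    _ = 2 * M * r := by ring
    _ ≤ 2 * M * (2 * d * ε * η ^ (d - 1)) := by nlinarith
    _ = 4 * d * M * ε * η ^ (d - 1) := by ring

end Stmt13

open Stmt13 in
set_option maxHeartbeats 1600000 in
/-- Single-scale (`m = 1`) cell-average estimate of Section 3.4 for
locally periodic fast oscillating coefficients: for `V(x,ξ)` bounded by `M`,
`ℤ^d`-periodic in `ξ`, with modulus of continuity `σ` in `x` at scale `√d·η`, and
`V⁰(x) = ∫_{[0,1]^d} V(x,ξ)dξ`, the average of `V(x, x/ε) − V⁰(x)` over any cell
`□_γ^η` is at most `C(σ + M ε/η)`, with `C` depending only on `d`. -/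
theorem stmt_13 (d : ℕ) (hd : 1 ≤ d) :
    ∃ C : ℝ, 0 < C ∧
      ∀ (n : ℕ), 1 ≤ n →
      ∀ (M σ : ℝ), 0 ≤ M → 0 ≤ σ →
      ∀ (V : Ed d → Ed d → Matrix (Fin n) (Fin n) ℂ),
        (∀ p q, Measurable fun xy : Ed d × Ed d => V xy.1 xy.2 p q) →
        (∀ x ξ : Ed d, frob (V x ξ) ≤ M) →
        (∀ (x ξ : Ed d) (k : Fin d → ℤ),
          V x (ξ + toEd fun i => (k i : ℝ)) = V x ξ) →
      ∀ (η ε : ℝ), 0 < η → 0 < ε → ε ≤ η →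
        (∀ (ξ x x' : Ed d), dist x x' ≤ Real.sqrt d * η →
          frob (V x ξ - V x' ξ) ≤ σ) →
      ∀ γ : Fin d → ℤ,
        frob (fun p q => ((η : ℂ) ^ d)⁻¹ *
            ∫ x in cell d η γ,
              (V x (ε⁻¹ • x) p q - ∫ ξ in cell d 1 0, V x ξ p q))
          ≤ C * (σ + M * ε / η) := by
  classical
  have hdR : (1 : ℝ) ≤ d := by exact_mod_cast hd
  refine ⟨4 * d, by linarith, ?_⟩
  intro n hn M σ hM hσ V hVmeas hVbd hVper η ε hη hε hεη hVmod γ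
  set W : Ed d → Ed d → EuclideanSpace ℂ (Fin n × Fin n) :=
    fun x ξ => WithLp.toLp 2 (fun pq : Fin n × Fin n => V x ξ pq.1 pq.2) with hW_def
  have frob_eq : ∀ (A : Matrix (Fin n) (Fin n) ℂ) (v : EuclideanSpace ℂ (Fin n × Fin n)),
      (∀ pq : Fin n × Fin n, v pq = A pq.1 pq.2) → frob A = ‖v‖ := by
    intro A v hv
    rw [EuclideanSpace.norm_eq]
    simp only [frob, hv]
    congr 1
    rw [Fintype.sum_prod_type]
  -- measurability and bounds for W
  have hWm : Measurable (fun xy : Ed d × Ed d => W xy.1 xy.2) :=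
    (WithLp.measurable_toLp 2 _).comp (measurable_pi_lambda _ fun pq => hVmeas pq.1 pq.2)
  have hWxm : ∀ x, Measurable (W x) := fun x => hWm.comp measurable_prodMk_left
  have hWb : ∀ x ξ, ‖W x ξ‖ ≤ M := by
    intro x ξ
    have h := hVbd x ξ
    rw [frob_eq (V x ξ) (W x ξ) (fun pq => rfl)] at h
    exact h
  have hWmod : ∀ (ξ x x' : Ed d), dist x x' ≤ Real.sqrt d * η → ‖W x ξ - W x' ξ‖ ≤ σ := by
    intro ξ x x' hdist
    have h := hVmod ξ x x' hdist
    rw [frob_eq (V x ξ - V x' ξ) (W x ξ - W x' ξ) (fun pq => rfl)] at h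
    exact h
  -- volumes
  have hv10 : volume (cell d 1 0) = 1 := by
    rw [volume_cell zero_le_one]; simp
  have hv10fin : volume (cell d 1 0) < ⊤ := by rw [hv10]; exact ENNReal.one_lt_top
  have hvcell : volume (cell d η γ) = ENNReal.ofReal (η ^ d) := volume_cell hη.le γ
  have hvcellfin : volume (cell d η γ) < ⊤ := by rw [hvcell]; exact ENNReal.ofReal_lt_top
  have hvcellR : (volume (cell d η γ)).toReal = η ^ d := by
    rw [hvcell, ENNReal.toReal_ofReal (pow_nonneg hη.le d)]
  -- inner integral
  have hWint : ∀ x, IntegrableOn (W x) (cell d 1 0) := fun x =>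
    integrableOn_of_bdd hv10fin ((hWxm x).stronglyMeasurable.aestronglyMeasurable) (hWb x)
  set W0 : Ed d → EuclideanSpace ℂ (Fin n × Fin n) :=
    fun x => ∫ ξ in cell d 1 0, W x ξ with hW0_def
  have hW0sm : StronglyMeasurable W0 :=
    hWm.stronglyMeasurable.integral_prod_right'
  have hW0b : ∀ x, ‖W0 x‖ ≤ M := by
    intro x
    have h := norm_setIntegral_le_of_norm_le_const' hv10fin (measurableSet_cell 1 0)
      (fun ξ _ => hWb x ξ)
    rwa [hv10, ENNReal.toReal_one, mul_one] at h
  have hW0entry : ∀ (x : Ed d) (p q : Fin n),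
      W0 x (p, q) = ∫ ξ in cell d 1 0, V x ξ p q :=
    fun x p q => integral_proj (volume.restrict (cell d 1 0)) (hWint x) (p, q)
  -- the function under the outer integral
  set G : Ed d → EuclideanSpace ℂ (Fin n × Fin n) :=
    fun x => W x (ε⁻¹ • x) - W0 x with hG_def
  have hG1sm : StronglyMeasurable fun x : Ed d => W x (ε⁻¹ • x) :=
    hWm.stronglyMeasurable.comp_measurable (measurable_id.prodMk (measurable_const_smul ε⁻¹))
  have hGsm : StronglyMeasurable G := hG1sm.sub hW0sm
  have hGb : ∀ x, ‖G x‖ ≤ M + M := fun x =>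
    (norm_sub_le _ _).trans (add_le_add (hWb _ _) (hW0b _))
  have hGint : IntegrableOn G (cell d η γ) :=
    integrableOn_of_bdd hvcellfin hGsm.aestronglyMeasurable hGb
  -- corner point and distance bound
  set xγ : Ed d := toEd fun i => η * γ i with hxγ_def
  have hdistγ : ∀ x ∈ cell d η γ, dist x xγ ≤ Real.sqrt d * η := by
    intro x hx
    rw [EuclideanSpace.dist_eq]
    have hb : ∀ i : Fin d, dist (x i) (xγ i) ^ 2 ≤ η ^ 2 := by
      intro i
      have h1 := (hx i).1
      have h2 := (hx i).2
      have hxi : xγ i = η * γ i := rfl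
      rw [Real.dist_eq, hxi]
      have habs : |x i - η * γ i| ≤ η := abs_le.2 ⟨by linarith, by linarith⟩
      exact pow_le_pow_left₀ (abs_nonneg _) habs 2
    calc Real.sqrt (∑ i, dist (x i) (xγ i) ^ 2)
        ≤ Real.sqrt (∑ _i : Fin d, η ^ 2) :=
          Real.sqrt_le_sqrt (Finset.sum_le_sum fun i _ => hb i)
      _ = Real.sqrt ((d : ℝ) * η ^ 2) := by
          rw [Finset.sum_const, Finset.card_univ, Fintype.card_fin, nsmul_eq_mul]
      _ = Real.sqrt d * η := by
          rw [Real.sqrt_mul (Nat.cast_nonneg d), Real.sqrt_sq hη.le]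
  -- the frozen function
  set gg : Ed d → EuclideanSpace ℂ (Fin n × Fin n) := W xγ with hgg_def
  have hggsm : StronglyMeasurable gg := (hWxm xγ).stronglyMeasurable
  have hggb : ∀ ξ, ‖gg ξ‖ ≤ M := hWb xγ
  have hggper : ∀ (x : Ed d) (k : Fin d → ℤ), gg (x + toEd fun i => (k i : ℝ)) = gg x := by
    intro x k
    show WithLp.toLp 2 (fun pq : Fin n × Fin n => V xγ (x + toEd fun i => (k i : ℝ)) pq.1 pq.2)
        = WithLp.toLp 2 (fun pq : Fin n × Fin n => V xγ x pq.1 pq.2)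
    rw [hVper]
  have hggint10 : IntegrableOn gg (cell d 1 0) := hWint xγ
  set I0 : EuclideanSpace ℂ (Fin n × Fin n) := ∫ ξ in cell d 1 0, gg ξ with hI0_def
  have hI0b : ‖I0‖ ≤ M := by
    have h := norm_setIntegral_le_of_norm_le_const' hv10fin (measurableSet_cell 1 0)
      (fun ξ _ => hggb ξ)
    rwa [hv10, ENNReal.toReal_one, mul_one] at h
  -- decomposition
  set A1 : Ed d → EuclideanSpace ℂ (Fin n × Fin n) :=
    fun x => W x (ε⁻¹ • x) - gg (ε⁻¹ • x) with hA1_def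
  set A2 : Ed d → EuclideanSpace ℂ (Fin n × Fin n) :=
    fun x => gg (ε⁻¹ • x) - I0 with hA2_def
  set A3 : Ed d → EuclideanSpace ℂ (Fin n × Fin n) :=
    fun x => I0 - W0 x with hA3_def
  have hggεsm : StronglyMeasurable fun x : Ed d => gg (ε⁻¹ • x) :=
    hggsm.comp_measurable (measurable_const_smul ε⁻¹)
  have hA1int : IntegrableOn A1 (cell d η γ) :=
    integrableOn_of_bdd hvcellfin ((hG1sm.sub hggεsm).aestronglyMeasurable)
      (fun x => (norm_sub_le _ _).trans (add_le_add (hWb _ _) (hggb _)))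
  have hA2int : IntegrableOn A2 (cell d η γ) :=
    integrableOn_of_bdd hvcellfin ((hggεsm.sub stronglyMeasurable_const).aestronglyMeasurable)
      (fun x => (norm_sub_le _ _).trans (add_le_add (hggb _) hI0b))
  have hA3int : IntegrableOn A3 (cell d η γ) :=
    integrableOn_of_bdd hvcellfin ((stronglyMeasurable_const.sub hW0sm).aestronglyMeasurable)
      (fun x => (norm_sub_le _ _).trans (add_le_add hI0b (hW0b _)))
  have hGdecomp : ∀ x, G x = A1 x + A2 x + A3 x := by
    intro x
    simp only [hA1_def, hA2_def, hA3_def, hG_def]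
    abel
  have hsplit : ∫ x in cell d η γ, G x
      = ((∫ x in cell d η γ, A1 x) + ∫ x in cell d η γ, A2 x) + ∫ x in cell d η γ, A3 x := by
    calc ∫ x in cell d η γ, G x = ∫ x in cell d η γ, (A1 x + A2 x + A3 x) :=
          integral_congr_ae (Filter.Eventually.of_forall fun x => hGdecomp x)
      _ = ((∫ x in cell d η γ, A1 x) + ∫ x in cell d η γ, A2 x) + ∫ x in cell d η γ, A3 x := by
          have h12 : IntegrableOn (fun x => A1 x + A2 x) (cell d η γ) := hA1int.add hA2int
          rw [integral_add h12 hA3int, integral_add hA1int hA2int]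
  -- bounds on the three pieces
  have hA1bound : ‖∫ x in cell d η γ, A1 x‖ ≤ σ * η ^ d := by
    have h := norm_setIntegral_le_of_norm_le_const' hvcellfin (measurableSet_cell η γ)
      (fun x hx => hWmod (ε⁻¹ • x) x xγ (hdistγ x hx))
    rwa [hvcellR] at h
  have hA2bound : ‖∫ x in cell d η γ, A2 x‖ ≤ 4 * d * M * ε * η ^ (d - 1) := by
    have h0 : ∫ x in cell d η γ, A2 x
        = (∫ x in cell d η γ, gg (ε⁻¹ • x)) - (η ^ d) • I0 := by
      rw [hA2_def]
      rw [integral_sub (integrableOn_of_bdd hvcellfin hggεsm.aestronglyMeasurable (fun x => hggb (ε⁻¹ • x)))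
        (integrableOn_const hvcellfin.ne)]
      rw [setIntegral_const, Measure.real, hvcellR]
    rw [h0]
    exact core hd hggsm hM hggb hggper hη hε hεη γ
  have hA3bound : ‖∫ x in cell d η γ, A3 x‖ ≤ σ * η ^ d := by
    have hptw : ∀ x ∈ cell d η γ, ‖A3 x‖ ≤ σ := by
      intro x hx
      have hqq : A3 x = ∫ ξ in cell d 1 0, (gg ξ - W x ξ) := by
        rw [hA3_def]
        rw [integral_sub hggint10 (hWint x)]
      rw [hqq]
      have h := norm_setIntegral_le_of_norm_le_const' hv10fin (measurableSet_cell 1 0)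
        (fun ξ _ => hWmod ξ xγ x (by rw [dist_comm]; exact hdistγ x hx))
      rwa [hv10, ENNReal.toReal_one, mul_one] at h
    have h := norm_setIntegral_le_of_norm_le_const' hvcellfin (measurableSet_cell η γ) hptw
    rwa [hvcellR] at h
  have hJ : ‖∫ x in cell d η γ, G x‖ ≤ σ * η ^ d + 4 * d * M * ε * η ^ (d - 1) + σ * η ^ d := by
    rw [hsplit]
    calc ‖((∫ x in cell d η γ, A1 x) + ∫ x in cell d η γ, A2 x) + ∫ x in cell d η γ, A3 x‖
        ≤ ‖(∫ x in cell d η γ, A1 x) + ∫ x in cell d η γ, A2 x‖ + ‖∫ x in cell d η γ, A3 x‖ :=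
          norm_add_le _ _
      _ ≤ (‖∫ x in cell d η γ, A1 x‖ + ‖∫ x in cell d η γ, A2 x‖) + ‖∫ x in cell d η γ, A3 x‖ :=
          add_le_add_left (norm_add_le _ _) _
      _ ≤ σ * η ^ d + 4 * d * M * ε * η ^ (d - 1) + σ * η ^ d :=
          add_le_add (add_le_add hA1bound hA2bound) hA3bound
  -- rewrite the matrix
  have hmatrix : (fun p q => ((η : ℂ) ^ d)⁻¹ *
        ∫ x in cell d η γ, (V x (ε⁻¹ • x) p q - ∫ ξ in cell d 1 0, V x ξ p q))
      = fun p q => ((η : ℂ) ^ d)⁻¹ * ((∫ x in cell d η γ, G x) (p, q)) := by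
    funext p q
    congr 1
    have hptw : ∀ x ∈ cell d η γ,
        (V x (ε⁻¹ • x) p q - ∫ ξ in cell d 1 0, V x ξ p q) = G x (p, q) := by
      intro x _
      have h1 : G x (p, q) = W x (ε⁻¹ • x) (p, q) - W0 x (p, q) := rfl
      rw [h1, hW0entry x p q]
    rw [setIntegral_congr_fun (measurableSet_cell η γ) hptw]
    exact (integral_proj (volume.restrict (cell d η γ)) hGint (p, q)).symm
  rw [hmatrix]
  refine (le_of_eq (frob_eq _ (((η : ℂ) ^ d)⁻¹ • (∫ x in cell d η γ, G x)) (fun pq => rfl))).trans ?_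
  rw [norm_smul]
  have hc : ‖((η : ℂ) ^ d)⁻¹‖ = (η ^ d)⁻¹ := by
    have hcast : ((η : ℂ) ^ d)⁻¹ = (((η ^ d)⁻¹ : ℝ) : ℂ) := by push_cast; ring
    rw [hcast, Complex.norm_real, Real.norm_eq_abs, abs_of_pos (by positivity)]
  rw [hc]
  have hηd : (0 : ℝ) < η ^ d := pow_pos hη d
  have hstep : (η ^ d)⁻¹ * ‖∫ x in cell d η γ, G x‖
      ≤ (η ^ d)⁻¹ * (σ * η ^ d + 4 * d * M * ε * η ^ (d - 1) + σ * η ^ d) :=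
    mul_le_mul_of_nonneg_left hJ (inv_nonneg.2 hηd.le)
  have hpowd : η ^ d = η ^ (d - 1) * η := by
    obtain ⟨m, hm⟩ : ∃ m, d = m + 1 := ⟨d - 1, (Nat.succ_pred_eq_of_pos hd).symm⟩
    rw [hm, Nat.add_sub_cancel, pow_succ]
  have heq : (η ^ d)⁻¹ * (σ * η ^ d + 4 * d * M * ε * η ^ (d - 1) + σ * η ^ d)
      = 2 * σ + 4 * d * M * ε / η := by
    rw [hpowd]
    have hX : (0 : ℝ) < η ^ (d - 1) := pow_pos hη _
    field_simp
    ring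
  have hfinal : 2 * σ + 4 * d * M * ε / η ≤ 4 * d * (σ + M * ε / η) := by
    have h2σ : 2 * σ ≤ 4 * d * σ :=
      mul_le_mul_of_nonneg_right (by linarith : (2 : ℝ) ≤ 4 * d) hσ
    have hdiv : 4 * (d : ℝ) * M * ε / η = 4 * d * (M * ε / η) := by ring
    rw [hdiv]
    linarith [h2σ]
  refine le_trans hstep ?_
  rw [heq]
  exact hfinal

end
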